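/- Let m be a positive even integer and let M be the m × m antisymmetric matrix with entries M_{ij} = (-1)^{i+j+1} for i < j (and M_{ij} = -M_{ji}, M_{ii} = 0). Then for every subset J ⊆ {1,…,m} of even cardinality, the Pfaffian of the principal submatrix M|_J (rows and columns indexed by J) equals ε(J) := (-1)^{|J|(|J|-1)/2 + Σ_{j∈J} j}. -/

import Mathlib

open Matrix

/-- The set of permutations of `Fin (2n)` encoding perfect matchings in canonical form:
`σ(2j) < σ(2j+1)` for each `j`, and `σ(2j)` increasing in `j` (0-based indexing). -/
def pfMatchings (n : ℕ) : Finset (Equiv.Perm (Fin (2 * n))) :=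
  Finset.univ.filter fun σ =>
    (∀ j : Fin n, σ ⟨2 * (j : ℕ), by have := j.isLt; omega⟩ <
        σ ⟨2 * (j : ℕ) + 1, by have := j.isLt; omega⟩) ∧
    ∀ j k : Fin n, j < k →
      σ ⟨2 * (j : ℕ), by have := j.isLt; omega⟩ <
        σ ⟨2 * (k : ℕ), by have := k.isLt; omega⟩

/-- The Pfaffian of a `2n × 2n` matrix over a commutative ring,
`pf(M) = Σ_{matchings} sgn(π) ∏_j M_{π(2j-1),π(2j)}`
(equivalently `(1/(2ⁿ n!)) Σ_{π ∈ S_{2n}} sgn(π) ∏_j M_{π(2j-1),π(2j)}`). -/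
def pfaffian {R : Type*} [CommRing R] {n : ℕ}
    (M : Matrix (Fin (2 * n)) (Fin (2 * n)) R) : R :=
  ∑ σ ∈ pfMatchings n,
    Equiv.Perm.sign σ •
      ∏ j : Fin n,
        M (σ ⟨2 * (j : ℕ), by have := j.isLt; omega⟩)
          (σ ⟨2 * (j : ℕ) + 1, by have := j.isLt; omega⟩)


/-- The antisymmetric matrix with `M_{ij} = (-1)^{i+j+1}` for `i < j` (the formula is
insensitive to 0- vs 1-based indexing since it depends only on the parity of `i+j`). -/
def altSign (m : ℕ) : Matrix (Fin m) (Fin m) ℤ := fun i j =>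
  if i < j then (-1) ^ ((i : ℕ) + (j : ℕ) + 1)
  else if j < i then -((-1) ^ ((j : ℕ) + (i : ℕ) + 1))
  else 0

section SignSum

variable {N : ℕ}

lemma nonfix_nonempty {σ : Equiv.Perm (Fin N)} (h : σ ≠ 1) :
    (Finset.univ.filter fun q => σ q ≠ q).Nonempty := by
  by_contra hc
  rw [Finset.not_nonempty_iff_eq_empty, Finset.filter_eq_empty_iff] at hc
  exact h (Equiv.ext fun x => by simpa using hc (Finset.mem_univ x))

noncomputable def minNF (σ : Equiv.Perm (Fin N)) (h : σ ≠ 1) : Fin N :=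
  (Finset.univ.filter fun q => σ q ≠ q).min' (nonfix_nonempty h)

lemma minNF_ne (σ : Equiv.Perm (Fin N)) (h : σ ≠ 1) : σ (minNF σ h) ≠ minNF σ h := by
  have := Finset.min'_mem _ (nonfix_nonempty h)
  exact (Finset.mem_filter.mp this).2

lemma minNF_min (σ : Equiv.Perm (Fin N)) (h : σ ≠ 1) {q : Fin N}
    (hq : q < minNF σ h) : σ q = q := by
  by_contra hc
  exact absurd hq (not_lt.mpr (Finset.min'_le _ _ (by simp [hc])))

lemma minNF_eq (σ : Equiv.Perm (Fin N)) (h : σ ≠ 1) (p : Fin N) (hp : σ p ≠ p)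
    (hmin : ∀ q, q < p → σ q = q) : minNF σ h = p := by
  refine le_antisymm (Finset.min'_le _ _ (by simp [hp])) ?_
  by_contra hc
  exact minNF_ne σ h (hmin _ (not_le.mp hc))

def succAt (x : Fin N) : Fin N := if h : x.1 + 1 < N then ⟨x.1 + 1, h⟩ else x

noncomputable def phi (σ : Equiv.Perm (Fin N)) (h : σ ≠ 1) : Equiv.Perm (Fin N) :=
  Equiv.swap (σ (minNF σ h)) (σ (succAt (σ⁻¹ (minNF σ h)))) * σ

end SignSum


lemma mem_pfMatchings_iff {n : ℕ} {σ : Equiv.Perm (Fin (2 * n))} :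
    σ ∈ pfMatchings n ↔
      (∀ (j : Fin n) (a b : Fin (2 * n)), (a : ℕ) = 2 * (j : ℕ) → (b : ℕ) = 2 * (j : ℕ) + 1 →
        σ a < σ b) ∧
      (∀ (j k : Fin n) (a b : Fin (2 * n)), j < k → (a : ℕ) = 2 * (j : ℕ) → (b : ℕ) = 2 * (k : ℕ) →
        σ a < σ b) := by
  rw [pfMatchings, Finset.mem_filter]
  constructor
  · rintro ⟨-, h1, h2⟩
    constructor
    · intro j a b ha hb
      have Ha : a = ⟨2 * (j : ℕ), by have := j.isLt; omega⟩ := Fin.ext ha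
      have Hb : b = ⟨2 * (j : ℕ) + 1, by have := j.isLt; omega⟩ := Fin.ext hb
      rw [Ha, Hb]
      exact h1 j
    · intro j k a b hjk ha hb
      have Ha : a = ⟨2 * (j : ℕ), by have := j.isLt; omega⟩ := Fin.ext ha
      have Hb : b = ⟨2 * (k : ℕ), by have := k.isLt; omega⟩ := Fin.ext hb
      rw [Ha, Hb]
      exact h2 j k hjk
  · rintro ⟨h1, h2⟩
    exact ⟨Finset.mem_univ _, fun j => h1 j _ _ rfl rfl, fun j k hjk => h2 j k _ _ hjk rfl rfl⟩

lemma phi_spec {n : ℕ} {σ : Equiv.Perm (Fin (2 * n))} (hσ : σ ∈ pfMatchings n)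
    (hne : σ ≠ 1) :
    ∃ b c : Fin (2 * n), b ≠ c ∧ phi σ hne = Equiv.swap b c * σ ∧
      Equiv.swap b c * σ ∈ pfMatchings n ∧ Equiv.swap b c * σ ≠ 1 ∧
      ∀ hne', phi (Equiv.swap b c * σ) hne' = σ := by
  obtain ⟨h1, h2⟩ := mem_pfMatchings_iff.mp hσ
  obtain ⟨p, hpdef⟩ : ∃ p, minNF σ hne = p := ⟨_, rfl⟩
  have hp : σ p ≠ p := hpdef ▸ minNF_ne σ hne
  have hmin : ∀ q, q < p → σ q = q := fun q hq => minNF_min σ hne (hpdef ▸ hq)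
  have hF : ∀ y, σ y < p → σ y = y := fun y hy => σ.injective (hmin _ hy)
  have hpb : p < σ p :=
    lt_of_le_of_ne (not_lt.mp fun hlt => hp (hF p hlt)) (Ne.symm hp)
  obtain ⟨x, hxdef⟩ : ∃ x, σ⁻¹ p = x := ⟨_, rfl⟩
  have hσx : σ x = p := by rw [← hxdef]; exact Equiv.apply_symm_apply σ p
  have hxp : p < x := by
    rcases lt_trichotomy x p with h | h | h
    · exact absurd ((hmin x h).symm.trans hσx) (ne_of_lt h)
    · exact absurd (h ▸ hσx) hp
    · exact h
  have hxpv : (p : ℕ) < (x : ℕ) := hxp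
  have hpbv : p < σ p := hpb
  -- p is odd
  have hpodd : (p : ℕ) % 2 = 1 := by
    by_contra hev
    obtain ⟨j, hj⟩ : ∃ j : Fin n, (p : ℕ) = 2 * (j : ℕ) :=
      ⟨⟨(p : ℕ) / 2, by have := p.isLt; omega⟩, show (p : ℕ) = 2 * ((p : ℕ) / 2) by omega⟩
    rcases Nat.even_or_odd (x : ℕ) with hxe | hxo
    · obtain ⟨l, hl⟩ : ∃ l : Fin n, (x : ℕ) = 2 * (l : ℕ) :=
        ⟨⟨(x : ℕ) / 2, by have := x.isLt; omega⟩,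
          show (x : ℕ) = 2 * ((x : ℕ) / 2) by rcases hxe with ⟨t, ht⟩; omega⟩
      have hjl : j < l := by rw [Fin.lt_def]; omega
      have := h2 j l p x hjl hj hl
      rw [hσx] at this
      exact absurd (this.trans hpb) (lt_irrefl _)
    · obtain ⟨l, hl⟩ : ∃ l : Fin n, (x : ℕ) = 2 * (l : ℕ) + 1 :=
        ⟨⟨(x : ℕ) / 2, by have := x.isLt; omega⟩,
          show (x : ℕ) = 2 * ((x : ℕ) / 2) + 1 by rcases hxo with ⟨t, ht⟩; omega⟩
      have hEl := h1 l ⟨2 * (l : ℕ), by have := l.isLt; omega⟩ x rfl hl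
      rw [hσx] at hEl
      have hfix := hF _ hEl
      have hval : 2 * (l : ℕ) < (p : ℕ) := by
        have h5 : (⟨2 * (l : ℕ), by have := l.isLt; omega⟩ : Fin (2 * n)) < p :=
          lt_of_eq_of_lt hfix.symm hEl
        exact h5
      omega
  -- x is even
  have hxev : (x : ℕ) % 2 = 0 := by
    by_contra hodd
    obtain ⟨l, hl⟩ : ∃ l : Fin n, (x : ℕ) = 2 * (l : ℕ) + 1 :=
      ⟨⟨(x : ℕ) / 2, by have := x.isLt; omega⟩,
        show (x : ℕ) = 2 * ((x : ℕ) / 2) + 1 by omega⟩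
    have hEl := h1 l ⟨2 * (l : ℕ), by have := l.isLt; omega⟩ x rfl hl
    rw [hσx] at hEl
    have hfix := hF _ hEl
    have hval : 2 * (l : ℕ) < (p : ℕ) := by
      have h5 : (⟨2 * (l : ℕ), by have := l.isLt; omega⟩ : Fin (2 * n)) < p :=
        lt_of_eq_of_lt hfix.symm hEl
      exact h5
    omega
  obtain ⟨k, hk'⟩ : ∃ k : Fin n, (x : ℕ) = 2 * (k : ℕ) :=
    ⟨⟨(x : ℕ) / 2, by have := x.isLt; omega⟩, show (x : ℕ) = 2 * ((x : ℕ) / 2) by omega⟩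
  have hx1 : (x : ℕ) + 1 < 2 * n := by have := k.isLt; omega
  obtain ⟨x', hx'def⟩ : ∃ x', (⟨(x : ℕ) + 1, hx1⟩ : Fin (2 * n)) = x' := ⟨_, rfl⟩
  have hx'val : (x' : ℕ) = (x : ℕ) + 1 := by rw [← hx'def]
  have hsuccAt : succAt x = x' := by rw [succAt, dif_pos hx1, hx'def]
  obtain ⟨b, hbdef⟩ : ∃ b, σ p = b := ⟨_, rfl⟩
  obtain ⟨c, hcdef⟩ : ∃ c, σ x' = c := ⟨_, rfl⟩
  rw [hbdef] at hpb
  have hpc : p < c := by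
    have := h1 k x x' hk' (by omega)
    rw [hσx, hcdef] at this
    exact this
  have hxx' : x < x' := by rw [Fin.lt_def]; omega
  have hpx' : p ≠ x' := ne_of_lt (hxp.trans hxx')
  have hbc : b ≠ c := fun h => hpx' (σ.injective ((hbdef.trans h).trans hcdef.symm))
  have hpbne : p ≠ b := ne_of_lt hpb
  have hpcne : p ≠ c := ne_of_lt hpc
  have hvb : ∀ y, σ y = b → y = p := fun y hy => σ.injective (hy.trans hbdef.symm)
  have hvc : ∀ y, σ y = c → y = x' := fun y hy => σ.injective (hy.trans hcdef.symm)
  refine ⟨b, c, hbc, ?_, ?_, ?_, ?_⟩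
  · rw [phi, hpdef, hxdef, hsuccAt, hbdef, hcdef]
  · -- membership
    refine mem_pfMatchings_iff.mpr ⟨?_, ?_⟩
    · intro j a b2 ha hb2
      have hea : (Equiv.swap b c * σ) a = σ a := by
        show Equiv.swap b c (σ a) = σ a
        refine Equiv.swap_apply_of_ne_of_ne (fun h => ?_) (fun h => ?_)
        · have hov : (a : ℕ) = (p : ℕ) := congrArg Fin.val (hvb _ h)
          omega
        · have hov : (a : ℕ) = (x' : ℕ) := congrArg Fin.val (hvc _ h)
          omega
      rw [hea]
      by_cases hjp : b2 = p
      · have hc' : (Equiv.swap b c * σ) b2 = c := by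
          rw [hjp]
          show Equiv.swap b c (σ p) = c
          rw [hbdef, Equiv.swap_apply_left]
        rw [hc']
        have hpv : (b2 : ℕ) = (p : ℕ) := congrArg Fin.val hjp
        have hlt : a < p := by rw [Fin.lt_def]; omega
        rw [hmin _ hlt]
        exact hlt.trans hpc
      · by_cases hjx : b2 = x'
        · have hxv : (b2 : ℕ) = (x' : ℕ) := congrArg Fin.val hjx
          have hax : a = x := Fin.ext (by omega)
          have hb' : (Equiv.swap b c * σ) b2 = b := by
            rw [hjx]
            show Equiv.swap b c (σ x') = b
            rw [hcdef, Equiv.swap_apply_right]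
          rw [hb', hax, hσx]
          exact hpb
        · have hb1 : σ b2 ≠ b := fun h => hjp (hvb _ h)
          have hc1 : σ b2 ≠ c := fun h => hjx (hvc _ h)
          have he : (Equiv.swap b c * σ) b2 = σ b2 :=
            Equiv.swap_apply_of_ne_of_ne hb1 hc1
          rw [he]
          exact h1 j a b2 ha hb2
    · intro j l a b2 hjl ha hb2
      have hea : (Equiv.swap b c * σ) a = σ a := by
        show Equiv.swap b c (σ a) = σ a
        refine Equiv.swap_apply_of_ne_of_ne (fun h => ?_) (fun h => ?_)
        · have hov : (a : ℕ) = (p : ℕ) := congrArg Fin.val (hvb _ h)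
          omega
        · have hov : (a : ℕ) = (x' : ℕ) := congrArg Fin.val (hvc _ h)
          omega
      have heb : (Equiv.swap b c * σ) b2 = σ b2 := by
        show Equiv.swap b c (σ b2) = σ b2
        refine Equiv.swap_apply_of_ne_of_ne (fun h => ?_) (fun h => ?_)
        · have hov : (b2 : ℕ) = (p : ℕ) := congrArg Fin.val (hvb _ h)
          omega
        · have hov : (b2 : ℕ) = (x' : ℕ) := congrArg Fin.val (hvc _ h)
          omega
      rw [hea, heb]
      exact h2 j l a b2 hjl ha hb2
  · -- ≠ 1
    have hKp : (Equiv.swap b c * σ) p = c := by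
      show Equiv.swap b c (σ p) = c
      rw [hbdef, Equiv.swap_apply_left]
    intro heq1
    rw [heq1, Equiv.Perm.one_apply] at hKp
    exact hpcne hKp
  · -- involution
    intro hne'
    have hσ'p : (Equiv.swap b c * σ) p = c := by
      show Equiv.swap b c (σ p) = c
      rw [hbdef, Equiv.swap_apply_left]
    have hσ'x : (Equiv.swap b c * σ) x = p := by
      show Equiv.swap b c (σ x) = p
      rw [hσx]
      exact Equiv.swap_apply_of_ne_of_ne hpbne hpcne
    have hm' : minNF (Equiv.swap b c * σ) hne' = p := by
      refine minNF_eq _ _ p (by rw [hσ'p]; exact fun h => hpcne h.symm) (fun q hq => ?_)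
      show Equiv.swap b c (σ q) = q
      rw [hmin q hq]
      exact Equiv.swap_apply_of_ne_of_ne (ne_of_lt (hq.trans hpb)) (ne_of_lt (hq.trans hpc))
    have hinv' : (Equiv.swap b c * σ)⁻¹ p = x := by
      rw [← hσ'x]
      exact Equiv.symm_apply_apply _ _
    have hσ'x' : (Equiv.swap b c * σ) x' = b := by
      show Equiv.swap b c (σ x') = b
      rw [hcdef, Equiv.swap_apply_right]
    rw [phi, hm', hinv', hsuccAt, hσ'p, hσ'x', Equiv.swap_comm c b,
      Equiv.swap_mul_self_mul]

lemma sum_sign (n : ℕ) :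
    ∑ σ ∈ pfMatchings n, ((Equiv.Perm.sign σ : ℤˣ) : ℤ) = 1 := by
  have h1mem : (1 : Equiv.Perm (Fin (2 * n))) ∈ pfMatchings n := by
    refine mem_pfMatchings_iff.mpr ⟨?_, ?_⟩
    · intro j a b ha hb
      simp only [Equiv.Perm.one_apply]
      rw [Fin.lt_def]; omega
    · intro j k a b hjk ha hb
      have hv : (j : ℕ) < (k : ℕ) := hjk
      simp only [Equiv.Perm.one_apply]
      rw [Fin.lt_def]; omega
  rw [← Finset.add_sum_erase _ _ h1mem]
  have h0 : ∑ σ ∈ (pfMatchings n).erase 1, ((Equiv.Perm.sign σ : ℤˣ) : ℤ) = 0 := by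
    refine Finset.sum_involution
      (fun σ hσ => phi σ (Finset.ne_of_mem_erase hσ)) ?_ ?_ ?_ ?_
    · intro σ hσ
      obtain ⟨b, c, hbc, heq, -, -, -⟩ :=
        phi_spec (Finset.mem_of_mem_erase hσ) (Finset.ne_of_mem_erase hσ)
      rw [heq]
      simp [Equiv.Perm.sign_mul, Equiv.Perm.sign_swap hbc]
    · intro σ hσ hf
      obtain ⟨b, c, hbc, heq, -, -, -⟩ :=
        phi_spec (Finset.mem_of_mem_erase hσ) (Finset.ne_of_mem_erase hσ)
      rw [heq]
      intro hcontra
      have h1 : Equiv.swap b c * σ = 1 * σ := by rw [hcontra, one_mul]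
      exact hbc (Equiv.swap_eq_one_iff.mp (mul_right_cancel h1))
    · intro σ hσ
      obtain ⟨b, c, hbc, heq, hmem, hne1, -⟩ :=
        phi_spec (Finset.mem_of_mem_erase hσ) (Finset.ne_of_mem_erase hσ)
      rw [heq]
      exact Finset.mem_erase.mpr ⟨hne1, hmem⟩
    · intro σ hσ
      obtain ⟨b, c, hbc, heq, hmem, hne1, hinv⟩ :=
        phi_spec (Finset.mem_of_mem_erase hσ) (Finset.ne_of_mem_erase hσ)
      have key : ∀ (τ : Equiv.Perm (Fin (2 * n))) (hτ : τ ≠ 1),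
          τ = Equiv.swap b c * σ → phi τ hτ = σ := by
        rintro τ hτ rfl
        exact hinv _
      exact key _ _ heq
  rw [h0]
  simp

lemma prod_pairs {M : Type*} [CommMonoid M] (r : ℕ) (h : ℕ → M) :
    ∏ j ∈ Finset.range r, (h (2 * j) * h (2 * j + 1)) = ∏ i ∈ Finset.range (2 * r), h i := by
  induction r with
  | zero => simp
  | succ r ih =>
      rw [Finset.prod_range_succ, ih, Nat.mul_succ, Finset.prod_range_succ,
        Finset.prod_range_succ, mul_assoc]


set_option maxHeartbeats 1000000 in
/-- For even `m` and every subset `J ⊆ {1,…,m}` of even cardinality `2r`, the Pfaffian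
of the principal submatrix `M|_J` of the matrix with `M_{ij} = (-1)^{i+j+1}` (`i<j`)
equals `ε(J) = (-1)^{|J|(|J|-1)/2 + Σ_{j∈J} j}` (with 1-based element values `j`). -/
theorem pfaffian_altSign_submatrix (m r : ℕ) (hm : m % 2 = 0) (hm0 : 0 < m)
    (J : Finset (Fin m)) (hJ : J.card = 2 * r) :
    pfaffian (Matrix.of fun i j : Fin (2 * r) =>
        altSign m ((J.orderIsoOfFin hJ i : Fin m)) ((J.orderIsoOfFin hJ j : Fin m)))
      = (-1 : ℤ) ^ (J.card * (J.card - 1) / 2 + ∑ j ∈ J, ((j : ℕ) + 1)) := by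
  classical
  set f : Fin (2 * r) → ℕ := fun i => ((J.orderIsoOfFin hJ i : Fin m) : ℕ) with hf
  set S : ℕ := ∑ j ∈ J, (j : ℕ) with hS
  have hfsum : ∑ i : Fin (2 * r), f i = S := by
    rw [hS, ← Finset.sum_coe_sort J (fun j => (j : ℕ))]
    exact Equiv.sum_comp (J.orderIsoOfFin hJ).toEquiv
      (fun x : {y // y ∈ J} => ((x : Fin m) : ℕ))
  set g : Fin (2 * r) → ℤ := fun i => (-1 : ℤ) ^ (f i) with hg
  have key : ∀ σ ∈ pfMatchings r,
      (Equiv.Perm.sign σ •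
        ∏ j : Fin r,
          (Matrix.of fun i j : Fin (2 * r) =>
            altSign m ((J.orderIsoOfFin hJ i : Fin m)) ((J.orderIsoOfFin hJ j : Fin m)))
            (σ ⟨2 * (j : ℕ), by have := j.isLt; omega⟩)
            (σ ⟨2 * (j : ℕ) + 1, by have := j.isLt; omega⟩))
      = ((Equiv.Perm.sign σ : ℤˣ) : ℤ) * ((-1 : ℤ) ^ (r + S)) := by
    intro σ hσ
    have h1 := (mem_pfMatchings_iff.mp hσ).1
    have hmain : (∏ j : Fin r,
        (Matrix.of fun i j : Fin (2 * r) =>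
          altSign m ((J.orderIsoOfFin hJ i : Fin m)) ((J.orderIsoOfFin hJ j : Fin m)))
          (σ ⟨2 * (j : ℕ), by have := j.isLt; omega⟩)
          (σ ⟨2 * (j : ℕ) + 1, by have := j.isLt; omega⟩))
        = (-1 : ℤ) ^ (r + S) := by
      have hstep : ∀ j : Fin r,
          (Matrix.of fun i j : Fin (2 * r) =>
            altSign m ((J.orderIsoOfFin hJ i : Fin m)) ((J.orderIsoOfFin hJ j : Fin m)))
            (σ ⟨2 * (j : ℕ), by have := j.isLt; omega⟩)
            (σ ⟨2 * (j : ℕ) + 1, by have := j.isLt; omega⟩)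
          = (-1 : ℤ) * (g (σ ⟨2 * (j : ℕ), by have := j.isLt; omega⟩) *
              g (σ ⟨2 * (j : ℕ) + 1, by have := j.isLt; omega⟩)) := by
        intro j
        have hab : σ ⟨2 * (j : ℕ), by have := j.isLt; omega⟩ <
            σ ⟨2 * (j : ℕ) + 1, by have := j.isLt; omega⟩ := h1 j _ _ rfl rfl
        have hflt : (J.orderIsoOfFin hJ (σ ⟨2 * (j : ℕ), by have := j.isLt; omega⟩) : Fin m) <
            (J.orderIsoOfFin hJ (σ ⟨2 * (j : ℕ) + 1, by have := j.isLt; omega⟩) : Fin m) :=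
          Subtype.coe_lt_coe.mpr ((J.orderIsoOfFin hJ).strictMono hab)
        rw [Matrix.of_apply, altSign, if_pos hflt]
        rw [hg, hf]
        rw [pow_succ, pow_add]
        ring
      rw [Finset.prod_congr rfl (fun j _ => hstep j), Finset.prod_mul_distrib,
        Finset.prod_const, Finset.card_univ, Fintype.card_fin]
      have hpair : (∏ j : Fin r, (g (σ ⟨2 * (j : ℕ), by have := j.isLt; omega⟩) *
          g (σ ⟨2 * (j : ℕ) + 1, by have := j.isLt; omega⟩)))
          = ∏ i : Fin (2 * r), g (σ i) := by
        set G : ℕ → ℤ := fun i => if h : i < 2 * r then g (σ ⟨i, h⟩) else 1 with hG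
        have e1 : (∏ j : Fin r, (g (σ ⟨2 * (j : ℕ), by have := j.isLt; omega⟩) *
            g (σ ⟨2 * (j : ℕ) + 1, by have := j.isLt; omega⟩)))
            = ∏ j : Fin r, (G (2 * (j : ℕ)) * G (2 * (j : ℕ) + 1)) := by
          refine Finset.prod_congr rfl fun j _ => ?_
          simp only [hG]
          rw [dif_pos (by have := j.isLt; omega : 2 * (j : ℕ) < 2 * r),
            dif_pos (by have := j.isLt; omega : 2 * (j : ℕ) + 1 < 2 * r)]
        have e2 : ∏ i : Fin (2 * r), g (σ i) = ∏ i : Fin (2 * r), G (i : ℕ) := by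
          refine Finset.prod_congr rfl fun i _ => ?_
          simp only [hG]
          rw [dif_pos i.isLt]
        rw [e1, e2, Fin.prod_univ_eq_prod_range (fun i => G (2 * i) * G (2 * i + 1)) r,
          prod_pairs r G, ← Fin.prod_univ_eq_prod_range G (2 * r)]
      rw [hpair, Equiv.prod_comp σ g, hg]
      rw [Finset.prod_pow_eq_pow_sum, hfsum, pow_add]
    rw [hmain, Units.smul_def, smul_eq_mul]
  rw [pfaffian, Finset.sum_congr rfl key, ← Finset.sum_mul, sum_sign, one_mul]
  have hcard : J.card = 2 * r := hJ
  have hplus : ∑ j ∈ J, ((j : ℕ) + 1) = S + 2 * r := by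
    rw [Finset.sum_add_distrib, Finset.sum_const, smul_eq_mul, mul_one, hcard, hS]
  rw [hplus, hcard]
  have hdiv : 2 * r * (2 * r - 1) / 2 = r * (2 * r - 1) := by
    rw [mul_assoc, Nat.mul_div_cancel_left _ (by norm_num : 0 < 2)]
  rw [hdiv]
  have hexp : r * (2 * r - 1) + (S + 2 * r) = (r + S) + 2 * (r * r) := by
    cases r with
    | zero => omega
    | succ t =>
        have h21 : 2 * (t + 1) - 1 = 2 * t + 1 := by omega
        rw [h21]; ring
  rw [hexp]
  conv_rhs => rw [pow_add, pow_mul]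
  norm_num
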